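/- arXiv:1907.00876 — 5 statements merged into one kernel-verified Lean document; each statement's English description precedes it below -/
import Mathlib

section
/- Let A be a finite-dimensional real associative unital algebra and s ∈ A with s² = -1. Then the operator F_s(x) = sx + xs satisfies F_s²(F_s² + 4·Id) = 0, and consequently tr F_s = 0. -/
open LinearMap

lemma trace_zero_of_sq_neg_one (V : Type*) [AddCommGroup V] [Module ℝ V]
    [FiniteDimensional ℝ V] (f : Module.End ℝ V) (hf : f * f = -1) :
    LinearMap.trace ℝ V f = 0 := by
  let φ : ℂ →ₐ[ℝ] Module.End ℝ V := Complex.liftAux f hf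
  letI : Module ℂ V := Module.compHom V φ.toRingHom
  have hsmul : ∀ (c : ℂ) (v : V), c • v = φ c v := fun _ _ => rfl
  haveI : IsScalarTower ℝ ℂ V := ⟨fun r c v => by
    rw [hsmul, hsmul, Algebra.smul_def, map_mul]
    simp [Module.algebraMap_end_apply]⟩
  haveI : Module.Finite ℂ V := Module.Finite.of_restrictScalars_finite ℝ ℂ V
  let b := Module.finBasis ℂ V
  let B := Complex.basisOneI.smulTower b
  rw [LinearMap.trace_eq_matrix_trace ℝ B, Matrix.trace]
  have hfv : ∀ v : V, f v = Complex.I • v := by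
    intro v; rw [hsmul, Complex.liftAux_apply_I]
  have key : ∀ p : Fin 2 × Fin (Module.finrank ℂ V),
      (LinearMap.toMatrix B B f).diag p = 0 := by
    rintro ⟨j, i⟩
    rw [Matrix.diag, LinearMap.toMatrix_apply]
    rw [show B (j, i) = Complex.basisOneI j • b i from Module.Basis.smulTower_apply _ _ _]
    rw [hfv, smul_smul]
    rw [show (B.repr ((Complex.I * Complex.basisOneI j) • b i)) (j, i)
        = Complex.basisOneI.repr ((b.repr ((Complex.I * Complex.basisOneI j) • b i)) i) j
        from Module.Basis.smulTower_repr _ _ _ _]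
    rw [map_smul, Finsupp.smul_apply, Module.Basis.repr_self]
    fin_cases j <;>
      simp [Complex.coe_basisOneI_repr, Complex.coe_basisOneI, Complex.I_mul_I]
  exact Finset.sum_eq_zero fun p _ => key p

/-- For `s² = -1` in a finite-dimensional real associative unital algebra, the operator
`F_s(x) = sx + xs` satisfies `F_s²(F_s² + 4·Id) = 0` and `tr F_s = 0`. -/
theorem F_polynomial_identity_and_trace_zero
    {A : Type*} [Ring A] [Algebra ℝ A] [FiniteDimensional ℝ A]
    (s : A) (hs : s * s = -1) :
    ((LinearMap.mulLeft ℝ s + LinearMap.mulRight ℝ s) ∘ₗ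
        (LinearMap.mulLeft ℝ s + LinearMap.mulRight ℝ s)) ∘ₗ
      (((LinearMap.mulLeft ℝ s + LinearMap.mulRight ℝ s) ∘ₗ
          (LinearMap.mulLeft ℝ s + LinearMap.mulRight ℝ s)) +
        (4 : ℝ) • LinearMap.id) = 0 ∧
    LinearMap.trace ℝ A (LinearMap.mulLeft ℝ s + LinearMap.mulRight ℝ s) = 0 := by
  set L : Module.End ℝ A := LinearMap.mulLeft ℝ s with hL
  set R : Module.End ℝ A := LinearMap.mulRight ℝ s with hR
  have e₁ : L * L = -1 := by
    ext x; simp [hL, Module.End.mul_apply, ← mul_assoc, hs]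
  have e₂ : R * R = -1 := by
    ext x; simp [hR, Module.End.mul_apply, mul_assoc, hs]
  have hc : L * R = R * L := by
    ext x; simp [hL, hR, Module.End.mul_apply, mul_assoc]
  have hX : (R * L) * (R * L) = 1 := by
    calc (R * L) * (R * L) = R * ((L * R) * L) := by noncomm_ring
      _ = R * ((R * L) * L) := by rw [hc]
      _ = (R * R) * (L * L) := by noncomm_ring
      _ = (-1 : Module.End ℝ A) * (-1) := by rw [e₁, e₂]
      _ = 1 := by norm_num
  constructor
  · show ((L + R) * (L + R)) * (((L + R) * (L + R)) + (4 : ℝ) • 1) = 0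
    have h4 : (4 : ℝ) • (1 : Module.End ℝ A) = 4 := by
      rw [show ((4 : ℝ)) = ((4 : ℕ) : ℝ) by norm_num, Nat.cast_smul_eq_nsmul]
      norm_num
    rw [h4]
    have hsq : (L + R) * (L + R) = R * L + R * L - 2 := by
      calc (L + R) * (L + R) = L * L + (L * R + (R * L + R * R)) := by noncomm_ring
        _ = -1 + (R * L + (R * L + -1)) := by rw [e₁, e₂, hc]
        _ = R * L + R * L - 2 := by noncomm_ring; simp; abel
    rw [hsq]
    calc (R * L + R * L - 2) * (R * L + R * L - 2 + 4)
        = 4 * ((R * L) * (R * L)) - 4 * 1 := by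
          generalize R * L = X
          have h2 : Commute (2 : Module.End ℝ A) X := Commute.ofNat_left 2 X
          simp only [sub_mul, mul_sub, add_mul, mul_add, h2.eq]
          noncomm_ring
          congr 1
          simp only [zsmul_eq_mul]
          norm_num
      _ = 0 := by rw [hX]; noncomm_ring
  · rw [map_add]
    rw [trace_zero_of_sq_neg_one A L e₁, trace_zero_of_sq_neg_one A R e₂, add_zero]
end

section
/- Let A be a finite-dimensional real associative unital algebra of dimension N, and let S = {s ∈ A : s² = -1}. Then S is contained in a hyperplane of A not containing 1; consequently the map from ℂ₊ × S to A sending (x + iy, s) to x·1 + y·s (with y > 0) is injective. -/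
/-- If an endomorphism of a finite-dimensional real vector space squares to `-1`,
then its trace is zero. -/
lemma trace_eq_zero_of_sq_eq_neg_one {A : Type*} [AddCommGroup A] [Module ℝ A]
    [FiniteDimensional ℝ A] (f : Module.End ℝ A) (h : f * f = -1) :
    LinearMap.trace ℝ A f = 0 := by
  letI : Module ℂ A := Module.compHom A (Complex.liftAux f h).toRingHom
  have hsmul : ∀ (z : ℂ) (a : A), z • a = Complex.liftAux f h z a := fun _ _ => rfl
  haveI : IsScalarTower ℝ ℂ A := ⟨fun r z a => by
    rw [hsmul, hsmul, Algebra.smul_def, map_mul, AlgHom.commutes]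
    simp [Algebra.algebraMap_eq_smul_one, Module.algebraMap_end_apply]⟩
  haveI : FiniteDimensional ℂ A := FiniteDimensional.right ℝ ℂ A
  let bC := Module.finBasis ℂ A
  let bR := Complex.basisOneI.smulTower bC
  rw [LinearMap.trace_eq_matrix_trace ℝ bR f, Matrix.trace]
  apply Finset.sum_eq_zero
  rintro ⟨k, j⟩ -
  have hI : ∀ a : A, f a = Complex.I • a := fun a => by
    rw [hsmul, Complex.liftAux_apply_I]
  rw [Matrix.diag_apply, LinearMap.toMatrix_apply, Module.Basis.smulTower_apply,
    Module.Basis.smulTower_repr]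
  fin_cases k
  · simp [Complex.coe_basisOneI, hI, map_smul, Module.Basis.repr_self, Finsupp.smul_apply,
      Complex.coe_basisOneI_repr]
  · simp [Complex.coe_basisOneI, hI, smul_smul, Complex.I_mul_I, map_smul, Module.Basis.repr_self,
      Finsupp.smul_apply, Complex.coe_basisOneI_repr]

/-- In a nontrivial finite-dimensional real associative unital algebra `A`, the set
`S = {s : s² = -1}` is contained in a hyperplane not containing `1` (the kernel of a linear
functional not vanishing at `1`); consequently the map `ℂ₊ × S → A`,
`(x + iy, s) ↦ x·1 + y·s` (with `y > 0`) is injective. -/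
theorem S_in_hyperplane_and_injectivity
    {A : Type*} [Ring A] [Algebra ℝ A] [FiniteDimensional ℝ A] [Nontrivial A] :
    (∃ φ : A →ₗ[ℝ] ℝ, φ 1 ≠ 0 ∧ ∀ s : A, s * s = -1 → φ s = 0) ∧
    (∀ (x y x' y' : ℝ) (s s' : A), 0 < y → 0 < y' →
      s * s = -1 → s' * s' = -1 →
      x • (1 : A) + y • s = x' • (1 : A) + y' • s' →
      x = x' ∧ y = y' ∧ s = s') := by
  constructor
  · refine ⟨(LinearMap.trace ℝ A).comp (LinearMap.mul ℝ A), ?_, ?_⟩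
    · have : (LinearMap.mul ℝ A) 1 = (1 : Module.End ℝ A) := by
        ext x; simp
      simp only [LinearMap.comp_apply, this, LinearMap.trace_one]
      have := Module.finrank_pos (R := ℝ) (M := A)
      positivity
    · intro s hs
      apply trace_eq_zero_of_sq_eq_neg_one
      ext x
      simp [Module.End.mul_apply, ← mul_assoc, hs]
  · intro x y x' y' s s' hy hy' hs hs' heq
    -- first get a functional separating: use the hyperplane φ
    obtain ⟨φ, hφ1, hφS⟩ :
        ∃ φ : A →ₗ[ℝ] ℝ, φ 1 ≠ 0 ∧ ∀ s : A, s * s = -1 → φ s = 0 := by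
      refine ⟨(LinearMap.trace ℝ A).comp (LinearMap.mul ℝ A), ?_, ?_⟩
      · have : (LinearMap.mul ℝ A) 1 = (1 : Module.End ℝ A) := by
          ext x; simp
        simp only [LinearMap.comp_apply, this, LinearMap.trace_one]
        have := Module.finrank_pos (R := ℝ) (M := A)
        positivity
      · intro s hs
        apply trace_eq_zero_of_sq_eq_neg_one
        ext x
        simp [Module.End.mul_apply, ← mul_assoc, hs]
    have hx : x = x' := by
      have := congrArg φ heq
      simp only [map_add, map_smul, hφS s hs, hφS s' hs', smul_eq_mul, mul_zero,
        add_zero] at this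
      exact mul_right_cancel₀ hφ1 this
    subst hx
    have hys : y • s = y' • s' := by
      exact add_left_cancel heq
    have hy2 : y * y = y' * y' := by
      have h1 : (y • s) * (y • s) = (y' • s') * (y' • s') := by rw [hys]
      rw [smul_mul_smul_comm, smul_mul_smul_comm, hs, hs'] at h1
      have h2 : (y * y) • (1 : A) = (y' * y') • (1 : A) := by
        have := congrArg Neg.neg h1
        simpa [← smul_neg] using this
      exact smul_left_injective ℝ (one_ne_zero) h2
    have hyy : y = y' := by
      nlinarith
    subst hyy
    refine ⟨rfl, rfl, ?_⟩
    exact smul_right_injective A (ne_of_gt hy) hys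
end

section
/- Let A be a finite-dimensional real inner product space with an associative unital algebra structure, and let x ∈ A satisfy L_x + L_xᵗ = 2β·Id and L_xᵗ L_x = α²·Id for real numbers α, β with α² ≥ β². Then either x is a real multiple of 1 (when α² = β²), or x = β·1 + γ·s for some s with s² = -1, L_s orthogonal and antisymmetric, where γ = √(α² - β²) > 0. -/
/-- If `L_x + L_xᵗ = 2β·Id` and `L_xᵗ L_x = α²·Id` with `α² ≥ β²`, then either `α² = β²` and
`x = β·1`, or `α² > β²` and `x = β·1 + γ·s` where `γ = √(α² - β²)` and `s` is a square root
of `-1` with `L_s` orthogonal and antisymmetric. -/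
theorem quadratic_cone_characterization
    {A : Type*} [Ring A] [Algebra ℝ A] [FiniteDimensional ℝ A]
    (B : A →ₗ[ℝ] A →ₗ[ℝ] ℝ)
    (hsymm : ∀ x y : A, B x y = B y x)
    (hpos : ∀ x : A, x ≠ 0 → 0 < B x x)
    (adj : (A →ₗ[ℝ] A) → (A →ₗ[ℝ] A))
    (hadj : ∀ (f : A →ₗ[ℝ] A) (x y : A), B (f x) y = B x (adj f y))
    (x : A) (α β : ℝ) (hαβ : β ^ 2 ≤ α ^ 2)
    (htr : LinearMap.mulLeft ℝ x + adj (LinearMap.mulLeft ℝ x) = (2 * β) • LinearMap.id)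
    (hnorm : adj (LinearMap.mulLeft ℝ x) ∘ₗ LinearMap.mulLeft ℝ x = (α ^ 2) • LinearMap.id) :
    (α ^ 2 = β ^ 2 ∧ x = β • (1 : A)) ∨
    (β ^ 2 < α ^ 2 ∧ ∃ s : A, s * s = -1 ∧
      LinearMap.mulLeft ℝ s ∘ₗ adj (LinearMap.mulLeft ℝ s) = LinearMap.id ∧
      LinearMap.mulLeft ℝ s + adj (LinearMap.mulLeft ℝ s) = 0 ∧
      x = β • (1 : A) + Real.sqrt (α ^ 2 - β ^ 2) • s) := by
  -- vanishing criterion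
  have hzero : ∀ v : A, B v v = 0 → v = 0 := by
    intro v hv
    by_contra h
    have := hpos v h
    linarith
  have nondeg : ∀ v : A, (∀ z, B z v = 0) → v = 0 := by
    intro v h
    exact hzero v (h v)
  set L := LinearMap.mulLeft ℝ x with hL
  -- pointwise form of htr
  have happ : ∀ z : A, adj L z = (2 * β) • z - x * z := by
    intro z
    have := LinearMap.ext_iff.mp htr z
    simp only [LinearMap.add_apply, LinearMap.smul_apply, LinearMap.id_apply,
      LinearMap.mulLeft_apply, hL] at this ⊢
    linear_combination (norm := module) this
  -- pointwise form of hnorm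
  have hsq : ∀ z : A, x * (x * z) = (2 * β) • (x * z) - (α ^ 2) • z := by
    intro z
    have := LinearMap.ext_iff.mp hnorm z
    rw [LinearMap.comp_apply, happ] at this
    simp only [LinearMap.comp_apply, LinearMap.smul_apply, LinearMap.id_apply,
      LinearMap.mulLeft_apply, hL, happ] at this
    linear_combination (norm := module) -this
  -- antisymmetry of N = L - β Id
  have hBx : ∀ z w : A, B (x * z - β • z) w = - B z (x * w - β • w) := by
    intro z w
    have h1 : B (x * z) w = B z (adj L w) := by
      have := hadj L z w
      simpa [hL] using this
    rw [happ] at h1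
    simp only [map_sub, map_smul, LinearMap.sub_apply, LinearMap.smul_apply, map_sub,
      map_smul, smul_eq_mul] at h1 ⊢
    linarith [h1]
  -- square of x
  have hxx : x * x = (2 * β) • x - (α ^ 2) • (1 : A) := by
    have := hsq 1
    simpa using this
  rcases lt_or_eq_of_le hαβ with hlt | heq
  · -- generic case
    right
    refine ⟨hlt, ?_⟩
    set γ := Real.sqrt (α ^ 2 - β ^ 2) with hγdef
    have hγpos : 0 < γ := Real.sqrt_pos.mpr (by linarith)
    have hγsq : γ * γ = α ^ 2 - β ^ 2 := Real.mul_self_sqrt (by linarith)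
    have hγne : γ ≠ 0 := ne_of_gt hγpos
    set s : A := γ⁻¹ • (x - β • 1) with hs
    have hsz : ∀ z : A, s * z = γ⁻¹ • (x * z - β • z) := by
      intro z
      rw [hs, smul_mul_assoc, sub_mul, smul_mul_assoc, one_mul]
    have h1 : (x - β • (1 : A)) * (x - β • 1) = (β ^ 2 - α ^ 2) • (1 : A) := by
      have expand : (x - β • (1 : A)) * (x - β • 1)
          = x * x - (2 * β) • x + (β ^ 2) • (1 : A) := by
        rw [sub_mul, mul_sub, smul_mul_assoc, one_mul, mul_smul_comm, mul_one]
        module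
      rw [expand, hxx]
      module
    have hss : s * s = -1 := by
      have : s * s = (γ⁻¹ * γ⁻¹) • ((x - β • (1 : A)) * (x - β • 1)) := by
        rw [hs, smul_mul_assoc, mul_smul_comm, smul_smul]
      rw [this, h1, smul_smul]
      have h2 : γ⁻¹ * γ⁻¹ * (β ^ 2 - α ^ 2) = -1 := by
        have h3 : β ^ 2 - α ^ 2 = -(γ * γ) := by linarith
        rw [h3]
        field_simp
      rw [h2, neg_one_smul]
    -- antisymmetry for s
    have hBs : ∀ z w : A, B (s * z) w = - B z (s * w) := by
      intro z w
      rw [hsz, hsz, map_smul, map_smul, LinearMap.smul_apply, smul_eq_mul, smul_eq_mul,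
        hBx z w]
      ring
    -- identify the adjoint of mulLeft s
    have hadjs : ∀ w : A, adj (LinearMap.mulLeft ℝ s) w = -(s * w) := by
      intro w
      have key : ∀ z : A, B z (adj (LinearMap.mulLeft ℝ s) w + s * w) = 0 := by
        intro z
        rw [map_add]
        have h1 : B z (adj (LinearMap.mulLeft ℝ s) w) = B (s * z) w := by
          have := hadj (LinearMap.mulLeft ℝ s) z w
          simpa using this.symm
        rw [h1, hBs]
        ring
      exact eq_neg_of_add_eq_zero_left (nondeg _ key)
    refine ⟨s, hss, ?_, ?_, ?_⟩
    · ext z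
      simp only [LinearMap.comp_apply, LinearMap.mulLeft_apply, LinearMap.id_apply, hadjs]
      rw [mul_neg, ← mul_assoc, hss, neg_mul, one_mul, neg_neg]
    · ext z
      simp [hadjs]
    · rw [hs, smul_smul, mul_inv_cancel₀ hγne, one_smul]
      abel
  · -- degenerate case
    left
    refine ⟨heq.symm, ?_⟩
    have hN : ∀ z : A, x * z - β • z = 0 := by
      intro z
      apply hzero
      have h1 : B (x * z - β • z) (x * z - β • z) = - B z (x * (x * z - β • z) - β • (x * z - β • z)) :=
        hBx z (x * z - β • z)
      have h2 : x * (x * z - β • z) - β • (x * z - β • z) = 0 := by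
        rw [mul_sub, mul_smul_comm, hsq, ← heq]
        match_scalars <;> ring
      rw [h2] at h1
      simpa using h1
    have := hN 1
    rw [mul_one] at this
    linear_combination (norm := module) this
end

section
/- Let A be a finite-dimensional real inner product space with an associative unital algebra structure, with complexified bilinear form Q on ℂ ⊗ A and quadratic form Φ(w) = Q(w,w). If w = 1⊗v + i⊗(sv) for some v ∈ A and some s with s² = -1, L_s orthogonal and antisymmetric, then Φ(ww') = 0 for all w' ∈ ℂ ⊗ A; equivalently, L_wᵗ L_w = 0 as an endomorphism of ℂ ⊗ A. -/
/-- Identify `ℂ ⊗ A` with `A × A` (`1⊗x + i⊗y ↦ (x,y)`), with product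
`(a,b)(c,d) = (ac - bd, ad + bc)` and `Q` the `ℂ`-bilinear extension of the inner product `B`,
`Φ(w) = Q(w,w)`. If `w = 1⊗v + i⊗(sv)` for some `v` and some `s` with `s² = -1`, `L_s`
orthogonal and antisymmetric, then `Φ(ww') = 0` for all `w' = (c,d)`; equivalently,
`L_vᵗ L_v = L_{sv}ᵗ L_{sv}` and `L_vᵗ L_{sv} + L_{sv}ᵗ L_v = 0`. -/
theorem zero_variety_quadratic_equations
    {A : Type*} [Ring A] [Algebra ℝ A] [FiniteDimensional ℝ A]
    (B : A →ₗ[ℝ] A →ₗ[ℝ] ℝ)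
    (hsymm : ∀ x y : A, B x y = B y x)
    (hpos : ∀ x : A, x ≠ 0 → 0 < B x x)
    (adj : (A →ₗ[ℝ] A) → (A →ₗ[ℝ] A))
    (hadj : ∀ (f : A →ₗ[ℝ] A) (x y : A), B (f x) y = B x (adj f y))
    (s : A) (hs : s * s = -1)
    (horth : LinearMap.mulLeft ℝ s ∘ₗ adj (LinearMap.mulLeft ℝ s) = LinearMap.id)
    (hanti : LinearMap.mulLeft ℝ s + adj (LinearMap.mulLeft ℝ s) = 0)
    (v : A) :
    (∀ c d : A,
      ((B (v * c - (s * v) * d) (v * c - (s * v) * d)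
          - B (v * d + (s * v) * c) (v * d + (s * v) * c) : ℝ) : ℂ)
        + ((B (v * c - (s * v) * d) (v * d + (s * v) * c)
            + B (v * d + (s * v) * c) (v * c - (s * v) * d) : ℝ) : ℂ) * Complex.I = 0) ∧
    adj (LinearMap.mulLeft ℝ v) ∘ₗ LinearMap.mulLeft ℝ v =
      adj (LinearMap.mulLeft ℝ (s * v)) ∘ₗ LinearMap.mulLeft ℝ (s * v) ∧
    adj (LinearMap.mulLeft ℝ v) ∘ₗ LinearMap.mulLeft ℝ (s * v) +
      adj (LinearMap.mulLeft ℝ (s * v)) ∘ₗ LinearMap.mulLeft ℝ v = 0 := by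
  -- adj (L_s) = - L_s
  have hadjS : adj (LinearMap.mulLeft ℝ s) = - LinearMap.mulLeft ℝ s := by
    have := hanti
    linear_combination (norm := abel) hanti
  -- antisymmetry: B (s*a) b = - B a (s*b)
  have hA : ∀ a b : A, B (s * a) b = - B a (s * b) := by
    intro a b
    have h := hadj (LinearMap.mulLeft ℝ s) a b
    simp [hadjS] at h
    simpa using h
  -- orthogonality: B (s*a) (s*b) = B a b
  have hO : ∀ a b : A, B (s * a) (s * b) = B a b := by
    intro a b
    have h := hA a (s * b)
    rw [← mul_assoc, hs] at h
    simpa using h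
  -- nondegeneracy
  have hnd : ∀ z : A, (∀ x : A, B x z = 0) → z = 0 := by
    intro z hz
    by_contra h
    have := hpos z h
    rw [hz z] at this
    exact lt_irrefl 0 this
  have hext : ∀ f g : A →ₗ[ℝ] A, (∀ x y : A, B x (f y) = B x (g y)) → f = g := by
    intro f g h
    ext y
    have hz : ∀ x : A, B x (f y - g y) = 0 := by
      intro x
      simp [map_sub, h x y]
    have := hnd _ hz
    rwa [sub_eq_zero] at this
  -- key pointwise consequences of hadj
  have hadj' : ∀ (f : A →ₗ[ℝ] A) (x y : A), B x (adj f y) = B (f x) y := fun f x y =>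
    (hadj f x y).symm
  refine ⟨?_, ?_, ?_⟩
  · intro c d
    have key : ∀ P : ℝ, (∀ Q : ℝ, P = Q → Q = 0 → P = 0) := by intro P Q h h'; rwa [h]
    have e1 : B (v * c - (s * v) * d) (v * c - (s * v) * d)
        - B (v * d + (s * v) * c) (v * d + (s * v) * c) = 0 := by
      simp only [map_sub, map_add, LinearMap.sub_apply, LinearMap.add_apply, mul_assoc]
      linarith [hO (v*d) (v*d), hO (v*c) (v*c), hO (v*d) (v*c), hO (v*c) (v*d),
        hA (v*d) (v*c), hA (v*c) (v*d), hA (v*c) (v*c), hA (v*d) (v*d),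
        hsymm (v*c) (s*(v*d)), hsymm (v*d) (s*(v*c)), hsymm (v*c) (s*(v*c)),
        hsymm (v*d) (s*(v*d)), hsymm (v*c) (v*d), hsymm (s*(v*d)) (s*(v*c))]
    have e2 : B (v * c - (s * v) * d) (v * d + (s * v) * c)
        + B (v * d + (s * v) * c) (v * c - (s * v) * d) = 0 := by
      simp only [map_sub, map_add, LinearMap.sub_apply, LinearMap.add_apply, mul_assoc]
      linarith [hO (v*d) (v*d), hO (v*c) (v*c), hO (v*d) (v*c), hO (v*c) (v*d),
        hA (v*d) (v*c), hA (v*c) (v*d), hA (v*c) (v*c), hA (v*d) (v*d),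
        hsymm (v*c) (s*(v*d)), hsymm (v*d) (s*(v*c)), hsymm (v*c) (s*(v*c)),
        hsymm (v*d) (s*(v*d)), hsymm (v*c) (v*d), hsymm (s*(v*d)) (s*(v*c)),
        hsymm (s*(v*c)) (s*(v*d)), hsymm (s*(v*c)) (v*c), hsymm (s*(v*d)) (v*d),
        hsymm (s*(v*d)) (v*c), hsymm (s*(v*c)) (v*d)]
    rw [e1, e2]
    simp
  · apply hext
    intro x y
    simp only [LinearMap.comp_apply, LinearMap.mulLeft_apply]
    rw [hadj', hadj']
    simp only [LinearMap.mulLeft_apply]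
    rw [mul_assoc s v x, mul_assoc s v y]
    exact (hO (v*x) (v*y)).symm
  · have : ∀ x y : A,
        B x ((adj (LinearMap.mulLeft ℝ v) ∘ₗ LinearMap.mulLeft ℝ (s * v) +
          adj (LinearMap.mulLeft ℝ (s * v)) ∘ₗ LinearMap.mulLeft ℝ v) y) = B x ((0 : A →ₗ[ℝ] A) y) := by
      intro x y
      simp only [LinearMap.add_apply, LinearMap.comp_apply, LinearMap.mulLeft_apply,
        LinearMap.zero_apply, map_add, map_zero]
      rw [hadj', hadj']
      simp only [LinearMap.mulLeft_apply]
      rw [mul_assoc s v y, mul_assoc s v x]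
      linarith [hA (v*x) (v*y)]
    exact hext _ _ this
end

section
/- Let A be a finite-dimensional real inner product space with an associative unital algebra structure. Let a, b ∈ A with a invertible, and suppose L_aᵗL_a = L_bᵗL_b and L_aᵗL_b + L_bᵗL_a = 0. Then b is invertible, and u = b a⁻¹ satisfies L_uᵗL_u = Id, L_u + L_uᵗ = 0 (hence u² = -1), and L_b = L_u L_a. -/
/-- Let `a, b ∈ A` with `a` invertible, `L_aᵗ L_a = L_bᵗ L_b` and `L_aᵗ L_b + L_bᵗ L_a = 0`.
Then `b` is invertible and `u = b a⁻¹` satisfies `L_uᵗ L_u = Id`, `L_u + L_uᵗ = 0`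
(hence `u² = -1`), and `L_b = L_u L_a`. -/
theorem zero_variety_unit_factorization
    {A : Type*} [Ring A] [Algebra ℝ A] [FiniteDimensional ℝ A]
    (B : A →ₗ[ℝ] A →ₗ[ℝ] ℝ)
    (hsymm : ∀ x y : A, B x y = B y x)
    (hpos : ∀ x : A, x ≠ 0 → 0 < B x x)
    (adj : (A →ₗ[ℝ] A) → (A →ₗ[ℝ] A))
    (hadj : ∀ (f : A →ₗ[ℝ] A) (x y : A), B (f x) y = B x (adj f y))
    (a b : A) (ha : IsUnit a)
    (h1 : adj (LinearMap.mulLeft ℝ a) ∘ₗ LinearMap.mulLeft ℝ a =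
      adj (LinearMap.mulLeft ℝ b) ∘ₗ LinearMap.mulLeft ℝ b)
    (h2 : adj (LinearMap.mulLeft ℝ a) ∘ₗ LinearMap.mulLeft ℝ b +
      adj (LinearMap.mulLeft ℝ b) ∘ₗ LinearMap.mulLeft ℝ a = 0) :
    IsUnit b ∧
    ∀ a' : A, a * a' = 1 → a' * a = 1 →
      adj (LinearMap.mulLeft ℝ (b * a')) ∘ₗ LinearMap.mulLeft ℝ (b * a') = LinearMap.id ∧
      LinearMap.mulLeft ℝ (b * a') + adj (LinearMap.mulLeft ℝ (b * a')) = 0 ∧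
      (b * a') * (b * a') = -1 ∧
      LinearMap.mulLeft ℝ b = LinearMap.mulLeft ℝ (b * a') ∘ₗ LinearMap.mulLeft ℝ a := by
  -- nondegeneracy
  have hnd : ∀ z : A, (∀ x : A, B x z = 0) → z = 0 := by
    intro z hz
    by_contra h
    have := hpos z h
    rw [hz z] at this
    exact lt_irrefl 0 this
  -- key identity from h1
  have key1 : ∀ s t : A, B (b * s) (b * t) = B (a * s) (a * t) := by
    intro s t
    have h1t : adj (LinearMap.mulLeft ℝ a) (a * t) = adj (LinearMap.mulLeft ℝ b) (b * t) := by
      have := congrArg (fun f => f t) h1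
      simpa using this
    have e1 : B (b * s) (b * t) = B s (adj (LinearMap.mulLeft ℝ b) (b * t)) := by
      have := hadj (LinearMap.mulLeft ℝ b) s (b * t)
      simpa using this
    have e2 : B (a * s) (a * t) = B s (adj (LinearMap.mulLeft ℝ a) (a * t)) := by
      have := hadj (LinearMap.mulLeft ℝ a) s (a * t)
      simpa using this
    rw [e1, e2, h1t]
  -- key identity from h2
  have key2 : ∀ s t : A, B (a * s) (b * t) + B (b * s) (a * t) = 0 := by
    intro s t
    have h2t : adj (LinearMap.mulLeft ℝ a) (b * t) + adj (LinearMap.mulLeft ℝ b) (a * t) = 0 := by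
      have := congrArg (fun f => f t) h2
      simpa using this
    have e1 : B (a * s) (b * t) = B s (adj (LinearMap.mulLeft ℝ a) (b * t)) := by
      have := hadj (LinearMap.mulLeft ℝ a) s (b * t); simpa using this
    have e2 : B (b * s) (a * t) = B s (adj (LinearMap.mulLeft ℝ b) (a * t)) := by
      have := hadj (LinearMap.mulLeft ℝ b) s (a * t); simpa using this
    rw [e1, e2, ← map_add, h2t, map_zero]
  -- injectivity of left multiplication by b
  have hbinj : Function.Injective (LinearMap.mulLeft ℝ b) := by
    rw [← LinearMap.ker_eq_bot, LinearMap.ker_eq_bot']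
    intro x hx
    by_contra hxne
    have hax : a * x ≠ 0 := by
      intro h0
      obtain ⟨u, hu⟩ := ha
      have : x = 0 := by
        have := congrArg (fun y => (↑u⁻¹ : A) * y) h0
        simpa [← hu, ← mul_assoc] using this
      exact hxne this
    have hbx : b * x = 0 := by simpa using hx
    have := hpos (a * x) hax
    rw [← key1 x x, hbx, map_zero] at this
    exact lt_irrefl 0 this
  have hbsurj : Function.Surjective (LinearMap.mulLeft ℝ b) :=
    (LinearMap.injective_iff_surjective).mp hbinj
  obtain ⟨c, hc⟩ := hbsurj 1
  have hbc : b * c = 1 := by simpa using hc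
  have hcb : c * b = 1 := by
    have : b * (c * b) = b * 1 := by rw [← mul_assoc, hbc, one_mul, mul_one]
    have := hbinj (by simpa using this : LinearMap.mulLeft ℝ b (c * b) = LinearMap.mulLeft ℝ b 1)
    exact this
  have hbunit : IsUnit b := ⟨⟨b, c, hbc, hcb⟩, rfl⟩
  refine ⟨hbunit, ?_⟩
  intro a' haa' ha'a
  set u := b * a' with hu
  have hux : ∀ x : A, u * x = b * (a' * x) := fun x => by rw [hu, mul_assoc]
  have haax : ∀ x : A, a * (a' * x) = x := fun x => by rw [← mul_assoc, haa', one_mul]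
  have ha'ax : ∀ x : A, a' * (a * x) = x := fun x => by rw [← mul_assoc, ha'a, one_mul]
  -- B (u*s) (u*t) = B s t
  have keyu : ∀ s t : A, B (u * s) (u * t) = B s t := by
    intro s t
    rw [hux, hux, key1 (a' * s) (a' * t)]
    rw [haax, haax]
  -- claim 1: adjoint times itself is id
  have claim1 : adj (LinearMap.mulLeft ℝ u) ∘ₗ LinearMap.mulLeft ℝ u = LinearMap.id := by
    apply LinearMap.ext
    intro x
    have hz : ∀ y : A, B y (adj (LinearMap.mulLeft ℝ u) (u * x) - x) = 0 := by
      intro y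
      have e : B (u * y) (u * x) = B y (adj (LinearMap.mulLeft ℝ u) (u * x)) := by
        have := hadj (LinearMap.mulLeft ℝ u) y (u * x); simpa using this
      rw [map_sub, ← e, keyu, sub_self]
    have := hnd _ hz
    have hzz : adj (LinearMap.mulLeft ℝ u) (u * x) = x := by
      have := sub_eq_zero.mp this; exact this
    simpa using hzz
  -- claim 2: skew-adjoint
  have claim2 : LinearMap.mulLeft ℝ u + adj (LinearMap.mulLeft ℝ u) = 0 := by
    apply LinearMap.ext
    intro x
    have hz : ∀ y : A, B y (u * x + adj (LinearMap.mulLeft ℝ u) x) = 0 := by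
      intro y
      have e : B y (adj (LinearMap.mulLeft ℝ u) x) = B (u * y) x := by
        have := hadj (LinearMap.mulLeft ℝ u) y x; simpa using this.symm
      rw [map_add, e]
      have hy : y = a * (a' * y) := (haax y).symm
      have hx : x = a * (a' * x) := (haax x).symm
      calc B y (u * x) + B (u * y) x
          = B (a * (a' * y)) (b * (a' * x)) + B (b * (a' * y)) (a * (a' * x)) := by
            rw [hux, hux, ← hy, ← hx]
        _ = 0 := key2 (a' * y) (a' * x)
    have := hnd _ hz
    have : u * x + adj (LinearMap.mulLeft ℝ u) x = 0 := this
    simpa using this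
  have hadju : adj (LinearMap.mulLeft ℝ u) = -LinearMap.mulLeft ℝ u := by
    have := claim2
    linear_combination (norm := abel) this
  -- claim 3: u * u = -1
  have claim3 : u * u = -1 := by
    have h := congrArg (fun f : A →ₗ[ℝ] A => f 1) claim1
    rw [hadju] at h
    simp only [LinearMap.comp_apply, LinearMap.neg_apply, LinearMap.mulLeft_apply,
      LinearMap.id_apply, mul_one] at h
    exact neg_eq_iff_eq_neg.mp h
  -- claim 4
  have claim4 : LinearMap.mulLeft ℝ b = LinearMap.mulLeft ℝ u ∘ₗ LinearMap.mulLeft ℝ a := by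
    apply LinearMap.ext
    intro x
    simp only [LinearMap.comp_apply, LinearMap.mulLeft_apply]
    rw [hux, ha'ax]
  exact ⟨claim1, claim2, claim3, claim4⟩
end
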